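/- Let 1 ≤ k < n, κ_1 < … < κ_n real, c_1, …, c_n real, A a totally nonnegative real k×n matrix of rank k, and let w_1(x), …, w_k(x) be the Darboux coefficients and p(ζ, x) = ζ^k − Σ_{s=1}^k w_s(x) ζ^{k−s} the Sato characteristic polynomial. Then for all real ζ and x, τ(x)·p(ζ, x) = Σ_I Δ_I(A) · Π_{i_1<i_2, i_1,i_2∈I} (κ_{i_2} − κ_{i_1}) · Π_{i∈I} (ζ − κ_i) · e^{Σ_{i∈I} (κ_i x + c_i)}, where the sum is over all k-element subsets I of {1,…,n}. -/

import Mathlib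

open scoped BigOperators

/-- The `k × k` maximal minor of a real `k × n` matrix `A` on the set of columns `I`
(defined to be `0` when `I` does not have exactly `k` elements). -/
noncomputable def maxMinor {k n : ℕ} (A : Matrix (Fin k) (Fin n) ℝ)
    (I : Finset (Fin n)) : ℝ :=
  if h : I.card = k then
    (A.submatrix id fun j => ((I.orderIsoOfFin h) j : Fin n)).det
  else 0

/-- The Vandermonde-type product `Π_{i₁ < i₂, i₁,i₂ ∈ I} (κ i₂ - κ i₁)`. -/
noncomputable def vandProd {n : ℕ} (κ : Fin n → ℝ) (I : Finset (Fin n)) : ℝ :=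
  ∏ p ∈ (I ×ˢ I).filter fun p => p.1 < p.2, (κ p.2 - κ p.1)

section Helpers
open Matrix Finset

lemma iteratedDeriv_exp_sum {n : ℕ} (κ c : Fin n → ℝ) (l : ℕ) (a : Fin n → ℝ) :
    iteratedDeriv l (fun x => ∑ j, a j * Real.exp (κ j * x + c j)) =
    fun x => ∑ j, a j * κ j ^ l * Real.exp (κ j * x + c j) := by
  induction l generalizing a with
  | zero => simp
  | succ l ih =>
    rw [iteratedDeriv_succ']
    have hder : (deriv fun x => ∑ j, a j * Real.exp (κ j * x + c j)) =
        fun x => ∑ j, (a j * κ j) * Real.exp (κ j * x + c j) := by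
      funext y
      have h : HasDerivAt (fun x => ∑ j, a j * Real.exp (κ j * x + c j))
          (∑ j, (a j * κ j) * Real.exp (κ j * y + c j)) y := by
        apply HasDerivAt.fun_sum
        intro j _
        have h1 : HasDerivAt (fun x : ℝ => κ j * x + c j) (κ j) y := by
          simpa using ((hasDerivAt_id y).const_mul (κ j)).add_const (c j)
        have h2 := (h1.exp).const_mul (a j)
        have h3 : a j * κ j * Real.exp (κ j * y + c j) = a j * (Real.exp (κ j * y + c j) * κ j) := by
          ring
        rw [h3]
        exact h2
      exact h.deriv
    rw [hder, ih (fun j => a j * κ j)]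
    funext y
    refine Finset.sum_congr rfl fun j _ => ?_
    ring


noncomputable def rowMinor {m N : ℕ} (V : Matrix (Fin N) (Fin m) ℝ)
    (J : Finset (Fin N)) : ℝ :=
  if h : J.card = m then
    (V.submatrix (fun i => ((J.orderIsoOfFin h) i : Fin N)) id).det
  else 0

lemma cauchyBinet {m N : ℕ} (B : Matrix (Fin m) (Fin N) ℝ) (V : Matrix (Fin N) (Fin m) ℝ) :
    (B * V).det = ∑ J ∈ Finset.powersetCard m (Finset.univ : Finset (Fin N)),
      maxMinor B J * rowMinor V J := by
  classical
  have h1 : (B * V).det = ∑ r : Fin m → Fin N, (∏ i, B i (r i)) * (V.submatrix r id).det := by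
    have e0 : (B * V : Matrix (Fin m) (Fin m) ℝ) = fun i => ∑ j, (B i j) • V j := by
      funext i l
      simp [Matrix.mul_apply, Finset.sum_apply]
    rw [show (B * V).det = (Matrix.detRowAlternating : (Fin m → ℝ) [⋀^Fin m]→ₗ[ℝ] ℝ)
        (B * V) from rfl, e0]
    rw [show ((Matrix.detRowAlternating : (Fin m → ℝ) [⋀^Fin m]→ₗ[ℝ] ℝ)
        (fun i => ∑ j, (B i j) • V j) : ℝ) =
        (Matrix.detRowAlternating : (Fin m → ℝ) [⋀^Fin m]→ₗ[ℝ] ℝ).toMultilinearMap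
        (fun i => ∑ j, (B i j) • V j) from rfl]
    rw [MultilinearMap.map_sum]
    refine Finset.sum_congr rfl fun r _ => ?_
    rw [MultilinearMap.map_smul_univ]
    rfl
  have hzero : ∀ r : Fin m → Fin N, ¬ Function.Injective r → (V.submatrix r id).det = 0 := by
    intro r hr
    rw [Function.not_injective_iff] at hr
    obtain ⟨i, j, hij, hne⟩ := hr
    refine Matrix.det_zero_of_row_eq hne ?_
    funext l
    simp [Matrix.submatrix_apply, hij]
  have h2 : (B * V).det = ∑ J : Finset (Fin N),
      ∑ r ∈ univ.filter (fun r : Fin m → Fin N => univ.image r = J),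
        (∏ i, B i (r i)) * (V.submatrix r id).det := by
    rw [h1, Finset.sum_fiberwise_of_maps_to (g := fun r : Fin m → Fin N => univ.image r)
      (fun r _ => Finset.mem_univ _)]
  rw [h2, ← Finset.sum_subset
    (Finset.subset_univ (Finset.powersetCard m (univ : Finset (Fin N)))) ?_]
  swap
  · intro J _ hJ
    refine Finset.sum_eq_zero fun r hr => ?_
    simp only [Finset.mem_filter, Finset.mem_univ, true_and] at hr
    have hrni : ¬ Function.Injective r := by
      intro hinj
      apply hJ
      rw [Finset.mem_powersetCard_univ, ← hr, Finset.card_image_of_injective _ hinj,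
        Finset.card_univ, Fintype.card_fin]
    rw [hzero r hrni, mul_zero]
  refine Finset.sum_congr rfl fun J hJ => ?_
  have hJc : J.card = m := Finset.mem_powersetCard_univ.mp hJ
  set e : Fin m → Fin N := fun i => ((J.orderIsoOfFin hJc) i : Fin N) with he
  have heJ : ∀ i, e i ∈ J := fun i => ((J.orderIsoOfFin hJc) i).2
  have heinj : Function.Injective e := fun a b hab => by
    have := (J.orderIsoOfFin hJc).injective (Subtype.ext hab)
    exact this
  have hmem : ∀ j ∈ J, ∃ i, e i = j := by
    intro j hj
    refine ⟨(J.orderIsoOfFin hJc).symm ⟨j, hj⟩, ?_⟩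
    show ((J.orderIsoOfFin hJc) ((J.orderIsoOfFin hJc).symm ⟨j, hj⟩) : Fin N) = j
    rw [OrderIso.apply_symm_apply]
  have hfiber : ∑ r ∈ univ.filter (fun r : Fin m → Fin N => univ.image r = J),
      (∏ i, B i (r i)) * (V.submatrix r id).det
      = ∑ σ : Equiv.Perm (Fin m), (∏ i, B i (e (σ i))) * (V.submatrix (e ∘ σ) id).det := by
    refine (Finset.sum_bij (fun (σ : Equiv.Perm (Fin m)) _ => e ∘ σ) ?_ ?_ ?_ ?_).symm
    · intro σ _
      simp only [Finset.mem_filter, Finset.mem_univ, true_and]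
      ext j
      simp only [Finset.mem_image, Finset.mem_univ, true_and, Function.comp_apply]
      constructor
      · rintro ⟨i, rfl⟩; exact heJ _
      · intro hj
        obtain ⟨i, hi⟩ := hmem j hj
        exact ⟨σ.symm i, by simp [hi]⟩
    · intro σ₁ _ σ₂ _ hσ
      ext i
      exact congrArg Fin.val (heinj (congrFun hσ i))
    · intro r hr
      simp only [Finset.mem_filter, Finset.mem_univ, true_and] at hr
      have hrinj : Function.Injective r := by
        have : (univ.image r).card = (univ : Finset (Fin m)).card := by
          rw [hr, hJc, Finset.card_univ, Fintype.card_fin]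
        rw [Finset.card_image_iff] at this
        intro a b hab
        exact this (Finset.mem_univ a) (Finset.mem_univ b) hab
      have hri : ∀ i, r i ∈ J := fun i => by
        rw [← hr]; exact Finset.mem_image_of_mem r (Finset.mem_univ i)
      set φ : Fin m → Fin m := fun i => (J.orderIsoOfFin hJc).symm ⟨r i, hri i⟩ with hφ
      have hφinj : Function.Injective φ := by
        intro a b hab
        apply hrinj
        have := congrArg (fun z => ((J.orderIsoOfFin hJc) z : Fin N)) hab
        simpa [hφ] using this
      refine ⟨Equiv.ofBijective φ (Finite.injective_iff_bijective.mp hφinj), Finset.mem_univ _, ?_⟩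
      funext i
      show e ((Equiv.ofBijective φ _) i) = r i
      rw [Equiv.ofBijective_apply]
      show ((J.orderIsoOfFin hJc) ((J.orderIsoOfFin hJc).symm ⟨r i, hri i⟩) : Fin N) = r i
      rw [OrderIso.apply_symm_apply]
    · intro σ _
      rfl
  rw [hfiber]
  have hperm : ∀ σ : Equiv.Perm (Fin m), (V.submatrix (e ∘ σ) id).det
      = (Equiv.Perm.sign σ : ℝ) * (V.submatrix e id).det := by
    intro σ
    have hh : V.submatrix (e ∘ σ) id = (V.submatrix e id).submatrix σ id := by
      ext i l; simp
    rw [hh, Matrix.det_permute]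
  have hB : maxMinor B J = ∑ σ : Equiv.Perm (Fin m), (Equiv.Perm.sign σ : ℝ) * ∏ i, B i (e (σ i)) := by
    rw [maxMinor, dif_pos hJc, ← Matrix.det_transpose, Matrix.det_apply']
    refine Finset.sum_congr rfl fun σ _ => rfl
  have hV : rowMinor V J = (V.submatrix e id).det := by
    rw [rowMinor, dif_pos hJc]
  rw [hV, hB, Finset.sum_mul]
  refine Finset.sum_congr rfl fun σ _ => ?_
  rw [hperm σ]
  ring


lemma prod_orderEmb {M : Type*} [CommMonoid M] {N k : ℕ} (I : Finset (Fin N)) (h : I.card = k)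
    (g : Fin N → M) : ∏ l : Fin k, g (I.orderEmbOfFin h l) = ∏ i ∈ I, g i := by
  refine Finset.prod_bij (fun l _ => I.orderEmbOfFin h l)
    (fun l _ => Finset.orderEmbOfFin_mem I h l)
    (fun a _ b _ hab => (I.orderEmbOfFin h).injective hab) ?_ (fun l _ => rfl)
  intro j hj
  refine ⟨(I.orderIsoOfFin h).symm ⟨j, hj⟩, Finset.mem_univ _, ?_⟩
  show (I.orderEmbOfFin h) _ = j
  rw [← Finset.coe_orderIsoOfFin_apply, OrderIso.apply_symm_apply]

lemma sum_orderEmb {M : Type*} [AddCommMonoid M] {N k : ℕ} (I : Finset (Fin N)) (h : I.card = k)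
    (g : Fin N → M) : ∑ l : Fin k, g (I.orderEmbOfFin h l) = ∑ i ∈ I, g i := by
  refine Finset.sum_bij (fun l _ => I.orderEmbOfFin h l)
    (fun l _ => Finset.orderEmbOfFin_mem I h l)
    (fun a _ b _ hab => (I.orderEmbOfFin h).injective hab) ?_ (fun l _ => rfl)
  intro j hj
  refine ⟨(I.orderIsoOfFin h).symm ⟨j, hj⟩, Finset.mem_univ _, ?_⟩
  show (I.orderEmbOfFin h) _ = j
  rw [← Finset.coe_orderIsoOfFin_apply, OrderIso.apply_symm_apply]

lemma vandProd_emb {n k : ℕ} (κ : Fin n → ℝ) (I : Finset (Fin n)) (h : I.card = k) :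
    vandProd κ I = ∏ i : Fin k, ∏ j ∈ Finset.Ioi i,
      (κ (I.orderEmbOfFin h j) - κ (I.orderEmbOfFin h i)) := by
  rw [vandProd, Finset.prod_sigma']
  refine (Finset.prod_bij
    (fun (q : Σ _ : Fin k, Fin k) _ => ((I.orderEmbOfFin h q.1, I.orderEmbOfFin h q.2) : Fin n × Fin n))
    ?_ ?_ ?_ ?_).symm
  · rintro ⟨a, b⟩ hq
    simp only [Finset.mem_sigma, Finset.mem_univ, true_and, Finset.mem_Ioi] at hq
    simp only [Finset.mem_filter, Finset.mem_product]
    exact ⟨⟨Finset.orderEmbOfFin_mem I h a, Finset.orderEmbOfFin_mem I h b⟩,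
      (I.orderEmbOfFin h).strictMono hq⟩
  · rintro ⟨a, b⟩ _ ⟨a', b'⟩ _ hab
    simp only [Prod.mk.injEq] at hab
    have h1 := (I.orderEmbOfFin h).injective hab.1
    have h2 := (I.orderEmbOfFin h).injective hab.2
    subst h1; subst h2; rfl
  · rintro ⟨p1, p2⟩ hp
    simp only [Finset.mem_filter, Finset.mem_product] at hp
    obtain ⟨⟨hp1, hp2⟩, hlt⟩ := hp
    refine ⟨⟨(I.orderIsoOfFin h).symm ⟨p1, hp1⟩, (I.orderIsoOfFin h).symm ⟨p2, hp2⟩⟩, ?_, ?_⟩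
    · simp only [Finset.mem_sigma, Finset.mem_univ, true_and, Finset.mem_Ioi]
      have : ((⟨p1, hp1⟩ : {z // z ∈ I}) : Fin n) < ((⟨p2, hp2⟩ : {z // z ∈ I}) : Fin n) := hlt
      rw [← OrderIso.lt_iff_lt (I.orderIsoOfFin h), OrderIso.apply_symm_apply,
        OrderIso.apply_symm_apply]
      exact this
    · simp only [Prod.mk.injEq]
      constructor <;>
      · rw [← Finset.coe_orderIsoOfFin_apply, OrderIso.apply_symm_apply]
  · rintro ⟨a, b⟩ _
    rfl
end Helpers
open Matrix Finset

/-- for TNN soliton data with Darboux coefficients `w` and Sato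
characteristic polynomial `p(ζ,x) = ζ^k - Σ_s w_s(x) ζ^{k-s}`, one has
`τ(x)·p(ζ,x) = Σ_I Δ_I(A) · Π_{i₁<i₂∈I}(κ_{i₂}-κ_{i₁}) · Π_{i∈I}(ζ-κ_i) ·
e^{Σ_{i∈I}(κ_i x + c_i)}` over all `k`-element column subsets `I`. -/
theorem tau_mul_sato_char_poly_eq_sum_minors
    (k n : ℕ) (hk : 1 ≤ k) (hkn : k < n)
    (κ c : Fin n → ℝ) (hκ : StrictMono κ)
    (A : Matrix (Fin k) (Fin n) ℝ) (hrank : A.rank = k)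
    (hTNN : ∀ I : Finset (Fin n), I.card = k → 0 ≤ maxMinor A I)
    (f : Fin k → ℝ → ℝ)
    (hf : ∀ i x, f i x = ∑ j, A i j * Real.exp (κ j * x + c j))
    (τ : ℝ → ℝ)
    (hτ : ∀ x, τ x =
      Matrix.det (Matrix.of fun i l : Fin k => iteratedDeriv (l : ℕ) (f i) x))
    (w : Fin k → ℝ → ℝ)
    (hw : ∀ x i, iteratedDeriv k (f i) x =
      ∑ s : Fin k, w s x * iteratedDeriv (k - 1 - (s : ℕ)) (f i) x)
    (ζ x : ℝ) :
    τ x * (ζ ^ k - ∑ s : Fin k, w s x * ζ ^ (k - 1 - (s : ℕ))) =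
      ∑ I ∈ Finset.powersetCard k (Finset.univ : Finset (Fin n)),
        maxMinor A I * vandProd κ I * (∏ i ∈ I, (ζ - κ i)) *
          Real.exp (∑ i ∈ I, (κ i * x + c i)) := by
  classical
  set P : ℝ := ζ ^ k - ∑ s : Fin k, w s x * ζ ^ (k - 1 - (s : ℕ)) with hP
  set B : Matrix (Fin (k+1)) (Fin (n+1)) ℝ := Matrix.of (Fin.snoc
      (fun i : Fin k => Fin.snoc (fun j : Fin n => A i j * Real.exp (κ j * x + c j)) 0)
      (Fin.snoc (fun _ : Fin n => (0:ℝ)) 1)) with hBdef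
  set η : Fin (n+1) → ℝ := Fin.snoc κ ζ with hηdef
  set V : Matrix (Fin (n+1)) (Fin (k+1)) ℝ := Matrix.of (fun j l => η j ^ (l : ℕ)) with hVdef
  have hB1 : ∀ (i : Fin k) (j : Fin n), B (Fin.castSucc i) (Fin.castSucc j)
      = A i j * Real.exp (κ j * x + c j) := by
    intro i j; simp [hBdef]
  have hB2 : ∀ i : Fin k, B (Fin.castSucc i) (Fin.last n) = 0 := by
    intro i; simp [hBdef]
  have hB3 : ∀ j : Fin n, B (Fin.last k) (Fin.castSucc j) = 0 := by
    intro j; simp [hBdef]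
  have hB4 : B (Fin.last k) (Fin.last n) = 1 := by simp [hBdef]
  have hη1 : ∀ j : Fin n, η (Fin.castSucc j) = κ j := by intro j; simp [hηdef]
  have hη2 : η (Fin.last n) = ζ := by simp [hηdef]
  have hVap : ∀ (j : Fin (n+1)) (l : Fin (k+1)), V j l = η j ^ (l : ℕ) := by
    intro j l; rw [hVdef]; rfl
  have hfl : ∀ (i : Fin k) (l : ℕ),
      iteratedDeriv l (f i) x = ∑ j, A i j * κ j ^ l * Real.exp (κ j * x + c j) := by
    intro i l
    have hfi : f i = fun y => ∑ j, A i j * Real.exp (κ j * y + c j) := funext (hf i)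
    rw [hfi, iteratedDeriv_exp_sum]
  set D : Matrix (Fin (k+1)) (Fin (k+1)) ℝ := Matrix.of (Fin.snoc
      (fun i : Fin k => fun l : Fin (k+1) => iteratedDeriv (l : ℕ) (f i) x)
      (fun l : Fin (k+1) => ζ ^ (l : ℕ))) with hDdef
  have hD1 : ∀ (i : Fin k) (l : Fin (k+1)), D (Fin.castSucc i) l
      = iteratedDeriv (l : ℕ) (f i) x := by
    intro i l; simp [hDdef]
  have hD2 : ∀ l : Fin (k+1), D (Fin.last k) l = ζ ^ (l : ℕ) := by
    intro l; simp [hDdef]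
  have hBVD : B * V = D := by
    apply Matrix.ext
    intro i l
    induction i using Fin.lastCases with
    | last =>
      rw [hD2, Matrix.mul_apply, Fin.sum_univ_castSucc]
      have : ∀ j : Fin n, B (Fin.last k) (Fin.castSucc j) * V (Fin.castSucc j) l = 0 := by
        intro j; rw [hB3, zero_mul]
      rw [Finset.sum_congr rfl (fun j _ => this j), Finset.sum_const, smul_zero, zero_add,
        hB4, one_mul, hVap, hη2]
    | cast i =>
      rw [hD1, Matrix.mul_apply, Fin.sum_univ_castSucc, hfl]
      rw [hB2, zero_mul, add_zero]
      refine Finset.sum_congr rfl fun j _ => ?_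
      rw [hB1, hVap, hη1]
      ring
  set N : Matrix (Fin (k+1)) (Fin (k+1)) ℝ :=
      D.updateCol (Fin.last k) ((Pi.single (Fin.last k) P : Fin (k+1) → ℝ)) with hNdef
  have hNcol : ∀ (i l : Fin (k+1)), l ≠ Fin.last k → N i l = D i l := by
    intro i l hl; rw [hNdef, Matrix.updateCol_apply, if_neg hl]
  have hNlast : ∀ i : Fin (k+1), N i (Fin.last k) = (Pi.single (Fin.last k) P : Fin (k+1) → ℝ) i := by
    intro i; rw [hNdef, Matrix.updateCol_apply, if_pos rfl]
  have hrevval : ∀ s : Fin k, ((Fin.castSucc (Fin.rev s)) : ℕ) = k - 1 - (s : ℕ) := by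
    intro s
    rw [Fin.coe_castSucc, Fin.val_rev]
    omega
  set cc : Fin (k+1) → ℝ := fun j => if hj : (j : ℕ) < k then w (Fin.rev ⟨j, hj⟩) x else 0
    with hccdef
  set S : Finset (Fin (k+1)) := Finset.univ.image (fun s : Fin k => Fin.castSucc (Fin.rev s))
    with hSdef
  have hSinj : Function.Injective (fun s : Fin k => Fin.castSucc (Fin.rev s)) :=
    fun a b hab => Fin.rev_injective (Fin.castSucc_injective _ hab)
  have hlastS : Fin.last k ∉ S := by
    rw [hSdef]
    simp only [Finset.mem_image, Finset.mem_univ, true_and]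
    rintro ⟨s, hs⟩
    exact absurd hs (Fin.castSucc_lt_last _).ne
  have hccval : ∀ s : Fin k, cc (Fin.castSucc (Fin.rev s)) = w s x := by
    intro s
    have hlt : ((Fin.castSucc (Fin.rev s)) : ℕ) < k := by
      rw [Fin.coe_castSucc]; exact (Fin.rev s).isLt
    rw [hccdef]
    show (if hj : ((Fin.castSucc (Fin.rev s)) : ℕ) < k
        then w (Fin.rev ⟨((Fin.castSucc (Fin.rev s)) : ℕ), hj⟩) x else 0) = w s x
    rw [dif_pos hlt]
    have he : (⟨((Fin.castSucc (Fin.rev s)) : ℕ), hlt⟩ : Fin k) = Fin.rev s := by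
      ext; rw [Fin.coe_castSucc]
    rw [he, Fin.rev_rev]
  have hdetDN : D.det = N.det := by
    have key : Dᵀ = (Nᵀ).updateRow (Fin.last k)
        ((1:ℝ) • (Nᵀ) (Fin.last k) + ∑ j ∈ S, cc j • (Nᵀ) j) := by
      funext l i
      by_cases hl : l = Fin.last k
      · subst hl
        rw [Matrix.updateRow_self]
        show D i (Fin.last k) = ((1:ℝ) • (Nᵀ) (Fin.last k) + ∑ j ∈ S, cc j • (Nᵀ) j) i
        have hsum : (∑ j ∈ S, cc j • (Nᵀ) j) i
            = ∑ s : Fin k, w s x * D i (Fin.castSucc (Fin.rev s)) := by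
          rw [hSdef, Finset.sum_image (fun a _ b _ h => hSinj h)]
          rw [Finset.sum_apply]
          refine Finset.sum_congr rfl fun s _ => ?_
          rw [Pi.smul_apply, smul_eq_mul, hccval]
          show w s x * N i (Fin.castSucc (Fin.rev s)) = _
          rw [hNcol _ _ (Fin.castSucc_lt_last _).ne]
        rw [Pi.add_apply, hsum, one_smul]
        show D i (Fin.last k) = N i (Fin.last k) + _
        rw [hNlast]
        induction i using Fin.lastCases with
        | last =>
          rw [hD2, Pi.single_eq_same, Fin.val_last]
          have : ∀ s : Fin k, w s x * D (Fin.last k) (Fin.castSucc (Fin.rev s))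
              = w s x * ζ ^ (k - 1 - (s : ℕ)) := by
            intro s; rw [hD2, hrevval]
          rw [Finset.sum_congr rfl (fun s _ => this s), hP]
          ring
        | cast i =>
          rw [hD1, Pi.single_eq_of_ne (Fin.castSucc_lt_last _).ne, Fin.val_last, zero_add]
          have : ∀ s : Fin k, w s x * D (Fin.castSucc i) (Fin.castSucc (Fin.rev s))
              = w s x * iteratedDeriv (k - 1 - (s : ℕ)) (f i) x := by
            intro s; rw [hD1, hrevval]
          rw [Finset.sum_congr rfl (fun s _ => this s)]
          exact hw x i
      · rw [Matrix.updateRow_ne hl]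
        show D i l = N i l
        rw [hNcol _ _ hl]
    have := Matrix.det_updateRow_sum_aux (Nᵀ) S hlastS cc 1
    rw [← Matrix.det_transpose D, key, this, one_smul, Matrix.det_transpose]
  have hdetN : N.det = P * τ x := by
    rw [Matrix.det_succ_column N (Fin.last k)]
    rw [Finset.sum_eq_single (Fin.last k)]
    · rw [hNlast, Pi.single_eq_same, Fin.succAbove_last]
      have hmin : N.submatrix Fin.castSucc Fin.castSucc
          = Matrix.of (fun i l : Fin k => iteratedDeriv (l : ℕ) (f i) x) := by
        apply Matrix.ext
        intro i l
        rw [Matrix.submatrix_apply, hNcol _ _ (Fin.castSucc_lt_last l).ne, hD1]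
        rfl
      rw [hmin, ← hτ x]
      have hsign : ((-1 : ℝ)) ^ ((Fin.last k : ℕ) + (Fin.last k : ℕ)) = 1 := by
        rw [Fin.val_last, ← two_mul, pow_mul]
        norm_num
      rw [hsign]
      ring
    · intro i _ hne
      rw [hNlast, Pi.single_eq_of_ne hne, mul_zero, zero_mul]
    · intro h
      exact absurd (Finset.mem_univ _) h
  have hτP : τ x * P = (B * V).det := by
    rw [hBVD, hdetDN, hdetN]
    ring
  -- the embedding of column sets
  have hlastnot : ∀ I : Finset (Fin n), Fin.last n ∉ I.map Fin.castSuccEmb := by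
    intro I hmem
    rw [Finset.mem_map] at hmem
    obtain ⟨j, -, hj⟩ := hmem
    exact (Fin.castSucc_lt_last j).ne (by simpa using hj)
  set emb : Finset (Fin n) → Finset (Fin (n+1)) :=
      fun I => insert (Fin.last n) (I.map Fin.castSuccEmb) with hembdef
  have hembcard : ∀ I : Finset (Fin n), (emb I).card = I.card + 1 := by
    intro I
    show (insert (Fin.last n) (I.map Fin.castSuccEmb)).card = _
    rw [Finset.card_insert_of_notMem (hlastnot I), Finset.card_map]
  have hlastmem : ∀ I, Fin.last n ∈ emb I := fun I => Finset.mem_insert_self _ _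
  have hcastmem : ∀ (I) (i : Fin n), i ∈ I → Fin.castSucc i ∈ emb I := by
    intro I i hi
    refine Finset.mem_insert_of_mem ?_
    rw [Finset.mem_map]
    exact ⟨i, hi, rfl⟩
  have hgval : ∀ (I : Finset (Fin n)) (hI : I.card = k) (l : Fin (k+1)),
      (emb I).orderEmbOfFin (show (emb I).card = k + 1 by rw [hembcard I, hI]) l
        = (Fin.snoc (fun l' : Fin k => Fin.castSucc (I.orderEmbOfFin hI l'))
            (Fin.last n) : Fin (k+1) → Fin (n+1)) l := by
    intro I hI
    have hmono : StrictMono (Fin.snoc (fun l' : Fin k =>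
        Fin.castSucc (I.orderEmbOfFin hI l')) (Fin.last n) : Fin (k+1) → Fin (n+1)) := by
      intro a b hab
      induction b using Fin.lastCases with
      | last =>
        obtain ⟨a', rfl⟩ := Fin.exists_castSucc_eq.mpr hab.ne
        rw [Fin.snoc_castSucc, Fin.snoc_last]
        exact Fin.castSucc_lt_last _
      | cast b' =>
        have ha : a ≠ Fin.last k := by
          intro h
          subst h
          exact (Fin.castSucc_lt_last b').asymm hab
        obtain ⟨a', rfl⟩ := Fin.exists_castSucc_eq.mpr ha
        rw [Fin.snoc_castSucc, Fin.snoc_castSucc]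
        rw [Fin.castSucc_lt_castSucc_iff] at hab ⊢
        exact (I.orderEmbOfFin hI).strictMono hab
    have hmem : ∀ l : Fin (k+1), (Fin.snoc (fun l' : Fin k =>
        Fin.castSucc (I.orderEmbOfFin hI l')) (Fin.last n) : Fin (k+1) → Fin (n+1)) l ∈ emb I := by
      intro l
      induction l using Fin.lastCases with
      | last => rw [Fin.snoc_last]; exact hlastmem I
      | cast l' => rw [Fin.snoc_castSucc]; exact hcastmem I _ (Finset.orderEmbOfFin_mem I hI l')
    have hu := Finset.orderEmbOfFin_unique
      (show (emb I).card = k + 1 by rw [hembcard I, hI]) hmem hmono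
    intro l
    exact (congrFun hu l).symm
  have hgcast : ∀ (I : Finset (Fin n)) (hI : I.card = k) (l' : Fin k),
      (emb I).orderEmbOfFin (show (emb I).card = k + 1 by rw [hembcard I, hI]) (Fin.castSucc l')
        = Fin.castSucc (I.orderEmbOfFin hI l') := by
    intro I hI l'
    rw [hgval I hI, Fin.snoc_castSucc]
  have hglast : ∀ (I : Finset (Fin n)) (hI : I.card = k),
      (emb I).orderEmbOfFin (show (emb I).card = k + 1 by rw [hembcard I, hI]) (Fin.last k)
        = Fin.last n := by
    intro I hI
    rw [hgval I hI, Fin.snoc_last]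
  -- the two minors of the extended matrices on an embedded column set
  have hmaxB : ∀ (I : Finset (Fin n)) (hI : I.card = k),
      maxMinor B (emb I) = Real.exp (∑ i ∈ I, (κ i * x + c i)) * maxMinor A I := by
    intro I hI
    have hJc : (emb I).card = k + 1 := by rw [hembcard I, hI]
    rw [maxMinor, dif_pos hJc]
    have hcoe : ∀ j : Fin (k+1), (((emb I).orderIsoOfFin hJc) j : Fin (n+1))
        = (emb I).orderEmbOfFin hJc j := fun j => Finset.coe_orderIsoOfFin_apply _ _ _
    rw [Matrix.det_succ_row _ (Fin.last k)]
    rw [Finset.sum_eq_single (Fin.last k)]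
    · have hent : (B.submatrix id fun j => (((emb I).orderIsoOfFin hJc) j : Fin (n+1)))
          (Fin.last k) (Fin.last k) = 1 := by
        rw [Matrix.submatrix_apply, hcoe, hglast I hI, id]
        exact hB4
      have hminor : (B.submatrix id fun j => (((emb I).orderIsoOfFin hJc) j : Fin (n+1))).submatrix
            (Fin.last k).succAbove (Fin.last k).succAbove
          = Matrix.of (fun i' l' : Fin k =>
              Real.exp (κ (I.orderEmbOfFin hI l') * x + c (I.orderEmbOfFin hI l')) *
              (A.submatrix id (fun j => ((I.orderIsoOfFin hI) j : Fin n))) i' l') := by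
        apply Matrix.ext
        intro i' l'
        rw [Fin.succAbove_last]
        rw [Matrix.submatrix_apply, Matrix.submatrix_apply, hcoe, hgcast I hI, id]
        rw [hB1]
        simp only [Matrix.of_apply, Matrix.submatrix_apply, id]
        rw [Finset.coe_orderIsoOfFin_apply]
        ring
      rw [hent, hminor, Matrix.det_mul_row]
      rw [← Real.exp_sum, sum_orderEmb I hI (fun i => κ i * x + c i)]
      rw [maxMinor, dif_pos hI]
      have hsign : ((-1 : ℝ)) ^ ((Fin.last k : ℕ) + (Fin.last k : ℕ)) = 1 := by
        rw [Fin.val_last, ← two_mul, pow_mul]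
        norm_num
      rw [hsign]
      ring
    · intro j _ hne
      obtain ⟨j', rfl⟩ := Fin.exists_castSucc_eq.mpr hne
      have : (B.submatrix id fun j => (((emb I).orderIsoOfFin hJc) j : Fin (n+1)))
          (Fin.last k) (Fin.castSucc j') = 0 := by
        rw [Matrix.submatrix_apply, hcoe, hgcast I hI, id]
        exact hB3 _
      rw [this, mul_zero, zero_mul]
    · intro h
      exact absurd (Finset.mem_univ _) h
  have hrowV : ∀ (I : Finset (Fin n)) (hI : I.card = k),
      rowMinor V (emb I) = vandProd κ I * ∏ i ∈ I, (ζ - κ i) := by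
    intro I hI
    have hJc : (emb I).card = k + 1 := by rw [hembcard I, hI]
    rw [rowMinor, dif_pos hJc]
    have hVsub : V.submatrix (fun i => (((emb I).orderIsoOfFin hJc) i : Fin (n+1))) id
        = Matrix.vandermonde (fun l => η ((emb I).orderEmbOfFin hJc l)) := by
      apply Matrix.ext
      intro i l
      rw [Matrix.submatrix_apply, Finset.coe_orderIsoOfFin_apply, Matrix.vandermonde_apply, hVap]
      rfl
    rw [hVsub, Matrix.det_vandermonde]
    have hvcast : ∀ l' : Fin k, η ((emb I).orderEmbOfFin hJc (Fin.castSucc l'))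
        = κ (I.orderEmbOfFin hI l') := by
      intro l'
      rw [hgcast I hI, hη1]
    have hvlast : η ((emb I).orderEmbOfFin hJc (Fin.last k)) = ζ := by
      rw [hglast I hI, hη2]
    rw [Fin.prod_univ_castSucc]
    have hIoiLast : (Finset.Ioi (Fin.last k) : Finset (Fin (k+1))) = ∅ := by
      ext j
      simp only [Finset.mem_Ioi, Finset.notMem_empty, iff_false]
      exact (Fin.le_last j).not_gt
    rw [hIoiLast, Finset.prod_empty, mul_one]
    have hinner : ∀ i : Fin k,
        (∏ j ∈ Finset.Ioi (Fin.castSucc i), (η ((emb I).orderEmbOfFin hJc j)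
            - η ((emb I).orderEmbOfFin hJc (Fin.castSucc i))))
        = (∏ j ∈ Finset.Ioi i, (κ (I.orderEmbOfFin hI j) - κ (I.orderEmbOfFin hI i)))
            * (ζ - κ (I.orderEmbOfFin hI i)) := by
      intro i
      have hIoi : (Finset.Ioi (Fin.castSucc i) : Finset (Fin (k+1)))
          = insert (Fin.last k) ((Finset.Ioi i).map Fin.castSuccEmb) := by
        ext j
        simp only [Finset.mem_Ioi, Finset.mem_insert, Finset.mem_map]
        constructor
        · intro hj
          by_cases hjl : j = Fin.last k
          · left; exact hjl
          · right
            obtain ⟨a, rfl⟩ := Fin.exists_castSucc_eq.mpr hjl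
            exact ⟨a, Fin.castSucc_lt_castSucc_iff.mp hj, rfl⟩
        · rintro (rfl | ⟨a, ha, rfl⟩)
          · exact Fin.castSucc_lt_last i
          · show Fin.castSucc i < Fin.castSucc a
            exact Fin.castSucc_lt_castSucc_iff.mpr ha
      rw [hIoi, Finset.prod_insert (by
        intro hmem
        rw [Finset.mem_map] at hmem
        obtain ⟨j, -, hj⟩ := hmem
        exact (Fin.castSucc_lt_last j).ne (by simpa using hj)), Finset.prod_map]
      rw [hvlast, hvcast]
      have : ∀ j ∈ Finset.Ioi i, (η ((emb I).orderEmbOfFin hJc (Fin.castSuccEmb j))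
          - κ (I.orderEmbOfFin hI i))
          = (κ (I.orderEmbOfFin hI j) - κ (I.orderEmbOfFin hI i)) := by
        intro j _
        have : (Fin.castSuccEmb j : Fin (k+1)) = Fin.castSucc j := rfl
        rw [this, hvcast]
      rw [Finset.prod_congr rfl this]
      ring
    rw [Finset.prod_congr rfl (fun i _ => hinner i), Finset.prod_mul_distrib]
    rw [← vandProd_emb κ I hI, prod_orderEmb I hI (fun i => ζ - κ i)]
  -- assembling the sum
  have hCB := cauchyBinet B V
  have hfilter : ∑ J ∈ Finset.powersetCard (k+1) (Finset.univ : Finset (Fin (n+1))),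
        maxMinor B J * rowMinor V J
      = ∑ J ∈ (Finset.powersetCard (k+1) (Finset.univ : Finset (Fin (n+1)))).filter
          (fun J => Fin.last n ∈ J), maxMinor B J * rowMinor V J := by
    refine (Finset.sum_subset (Finset.filter_subset _ _) ?_).symm
    intro J hJ hJn
    have hJc : J.card = k + 1 := Finset.mem_powersetCard_univ.mp hJ
    have hlastJ : Fin.last n ∉ J := fun hmem => hJn (Finset.mem_filter.mpr ⟨hJ, hmem⟩)
    have hBz : maxMinor B J = 0 := by
      rw [maxMinor, dif_pos hJc]
      refine Matrix.det_eq_zero_of_row_eq_zero (Fin.last k) ?_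
      intro l
      rw [Matrix.submatrix_apply, id]
      have hne : (((J.orderIsoOfFin hJc) l : Fin (n+1))) ≠ Fin.last n := by
        intro h
        apply hlastJ
        rw [← h]
        exact ((J.orderIsoOfFin hJc) l).2
      obtain ⟨j', hj'⟩ := Fin.exists_castSucc_eq.mpr hne
      rw [← hj']
      exact hB3 _
    rw [hBz, zero_mul]
  have hembpull : ∀ J : Finset (Fin (n+1)), Fin.last n ∈ J →
      emb (Finset.univ.filter (fun i : Fin n => Fin.castSucc i ∈ J)) = J := by
    intro J hJl
    show insert (Fin.last n) _ = J
    ext j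
    simp only [Finset.mem_insert, Finset.mem_map, Finset.mem_filter, Finset.mem_univ, true_and]
    constructor
    · rintro (rfl | ⟨a, ha, rfl⟩)
      · exact hJl
      · exact ha
    · intro hj
      by_cases hjl : j = Fin.last n
      · left; exact hjl
      · right
        obtain ⟨a, rfl⟩ := Fin.exists_castSucc_eq.mpr hjl
        exact ⟨a, hj, rfl⟩
  have hpullemb : ∀ I : Finset (Fin n),
      Finset.univ.filter (fun i : Fin n => Fin.castSucc i ∈ emb I) = I := by
    intro I
    ext i
    simp only [Finset.mem_filter, Finset.mem_univ, true_and]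
    constructor
    · intro h
      rcases Finset.mem_insert.mp h with h | h
      · exact absurd h (Fin.castSucc_lt_last i).ne
      · rw [Finset.mem_map] at h
        obtain ⟨a, ha, hae⟩ := h
        have haa : a = i := by
          apply Fin.ext
          simpa using congrArg Fin.val hae
        subst haa
        exact ha
    · intro h
      exact hcastmem I i h
  have hbij : ∑ J ∈ (Finset.powersetCard (k+1) (Finset.univ : Finset (Fin (n+1)))).filter
          (fun J => Fin.last n ∈ J), maxMinor B J * rowMinor V J
      = ∑ I ∈ Finset.powersetCard k (Finset.univ : Finset (Fin n)),
          maxMinor A I * vandProd κ I * (∏ i ∈ I, (ζ - κ i)) *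
            Real.exp (∑ i ∈ I, (κ i * x + c i)) := by
    refine (Finset.sum_bij' (fun I _ => emb I)
      (fun J _ => Finset.univ.filter (fun i : Fin n => Fin.castSucc i ∈ J)) ?_ ?_ ?_ ?_ ?_).symm
    · intro I hI
      rw [Finset.mem_powersetCard_univ] at hI
      refine Finset.mem_filter.mpr ⟨?_, hlastmem I⟩
      rw [Finset.mem_powersetCard_univ, hembcard I, hI]
    · intro J hJ
      rw [Finset.mem_filter] at hJ
      obtain ⟨hJp, hJl⟩ := hJ
      rw [Finset.mem_powersetCard_univ] at hJp
      rw [Finset.mem_powersetCard_univ]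
      show (Finset.univ.filter (fun i : Fin n => Fin.castSucc i ∈ J)).card = k
      have := hembcard (Finset.univ.filter (fun i : Fin n => Fin.castSucc i ∈ J))
      rw [hembpull J hJl] at this
      omega
    · intro I _
      exact hpullemb I
    · intro J hJ
      rw [Finset.mem_filter] at hJ
      exact hembpull J hJ.2
    · intro I hI
      rw [Finset.mem_powersetCard_univ] at hI
      rw [hmaxB I hI, hrowV I hI]
      ring
  rw [hτP, hCB, hfilter, hbij]
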